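/- arXiv:2004.09503 — 5 statements merged into one kernel-verified Lean document; each statement's English description precedes it below -/
import Mathlib

section
/- Let F(X,Y,Z) = G ∧ F' and F* = G* ∧ F' be propositional formulas over disjoint variable sets X, Y, Z, and let Tbl(X,Z) = ∃Y.F and Tbl*(X,Z) = ∃Y.F*. Suppose Q(X,Z) is a solution to the partial quantifier elimination problem of taking G* out of ∃Y.(G* ∧ F'), i.e., ∃Y.(G* ∧ F') ≡ Q ∧ ∃Y.F'. Suppose further that for every assignment x to X there exists z with Tbl(x,z)=1, and for every x there exists z with Tbl*(x,z)=1. Then F does not imply Q if and only if Tbl does not imply Tbl*. -/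
/-- Proposition 1: `F ⊬ Q` iff `Tbl ⊬ Tbl*`, for a PQE solution `Q`. -/
theorem false_property_characterization
    {σX σY σZ : Type}
    (G F' Gstar : σX → σY → σZ → Prop)
    (Q : σX → σZ → Prop)
    (F : σX → σY → σZ → Prop)
    (hF : ∀ x y z, F x y z ↔ G x y z ∧ F' x y z)
    (Fstar : σX → σY → σZ → Prop)
    (hFstar : ∀ x y z, Fstar x y z ↔ Gstar x y z ∧ F' x y z)
    (Tbl Tblstar : σX → σZ → Prop)
    (hTbl : ∀ x z, Tbl x z ↔ ∃ y, F x y z)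
    (hTblstar : ∀ x z, Tblstar x z ↔ ∃ y, Fstar x y z)
    (hPQE : ∀ x z, (∃ y, Gstar x y z ∧ F' x y z) ↔ (Q x z ∧ ∃ y, F' x y z))
    (hTotal : ∀ x, ∃ z, Tbl x z)
    (hTotalStar : ∀ x, ∃ z, Tblstar x z) :
    (¬ ∀ x y z, F x y z → Q x z) ↔ (¬ ∀ x z, Tbl x z → Tblstar x z) := by
  apply not_congr
  constructor
  · intro h x z hT
    obtain ⟨y, hy⟩ := (hTbl x z).mp hT
    obtain ⟨hG, hF'⟩ := (hF x y z).mp hy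
    have hQ := h x y z hy
    obtain ⟨y', hy'⟩ := (hPQE x z).mpr ⟨hQ, ⟨y, hF'⟩⟩
    exact (hTblstar x z).mpr ⟨y', (hFstar x y' z).mpr hy'⟩
  · intro h x y z hFxyz
    obtain ⟨hG, hF'⟩ := (hF x y z).mp hFxyz
    have hT : Tbl x z := (hTbl x z).mpr ⟨y, hFxyz⟩
    obtain ⟨y', hy'⟩ := (hTblstar x z).mp (h x z hT)
    exact ((hPQE x z).mp ⟨y', (hFstar x y' z).mp hy'⟩).1
end

section
/- Under the hypotheses of the previous setting (F = G ∧ F', F* = G* ∧ F', Tbl = ∃Y.F, Tbl* = ∃Y.F*, and Q a PQE solution with ∃Y.(G* ∧ F') ≡ Q ∧ ∃Y.F'), if additionally for every assignment x to X there is exactly one z with Tbl*(x,z)=1, and for every x there is at least one z with Tbl(x,z)=1, then F does not imply Q if and only if Tbl is not logically equivalent to Tbl*. -/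
/-- Proposition 2: under functionality of `Tbl*`, `F ⊬ Q` iff `Tbl ≢ Tbl*`. -/
theorem false_property_characterization_functional
    {σX σY σZ : Type}
    (G F' Gstar : σX → σY → σZ → Prop)
    (Q : σX → σZ → Prop)
    (F : σX → σY → σZ → Prop)
    (hF : ∀ x y z, F x y z ↔ G x y z ∧ F' x y z)
    (Fstar : σX → σY → σZ → Prop)
    (hFstar : ∀ x y z, Fstar x y z ↔ Gstar x y z ∧ F' x y z)
    (Tbl Tblstar : σX → σZ → Prop)
    (hTbl : ∀ x z, Tbl x z ↔ ∃ y, F x y z)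
    (hTblstar : ∀ x z, Tblstar x z ↔ ∃ y, Fstar x y z)
    (hPQE : ∀ x z, (∃ y, Gstar x y z ∧ F' x y z) ↔ (Q x z ∧ ∃ y, F' x y z))
    (hUniqueStar : ∀ x, ∃! z, Tblstar x z)
    (hTotal : ∀ x, ∃ z, Tbl x z) :
    (¬ ∀ x y z, F x y z → Q x z) ↔ (¬ ∀ x z, Tbl x z ↔ Tblstar x z) := by
  apply not_congr
  constructor
  · -- F → Q implies Tbl ≡ Tbl*
    intro h x z
    constructor
    · intro hT
      obtain ⟨y, hFy⟩ := (hTbl x z).1 hT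
      have hQ : Q x z := h x y z hFy
      have hF' : F' x y z := ((hF x y z).1 hFy).2
      obtain ⟨y', hy'⟩ := (hPQE x z).2 ⟨hQ, y, hF'⟩
      exact (hTblstar x z).2 ⟨y', (hFstar x y' z).2 hy'⟩
    · intro hTs
      obtain ⟨z', hTz'⟩ := hTotal x
      -- by forward direction, Tbl* x z', so z' = z by uniqueness
      obtain ⟨y, hFy⟩ := (hTbl x z').1 hTz'
      have hQ : Q x z' := h x y z' hFy
      have hF' : F' x y z' := ((hF x y z').1 hFy).2
      obtain ⟨y', hy'⟩ := (hPQE x z').2 ⟨hQ, y, hF'⟩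
      have hTsz' : Tblstar x z' := (hTblstar x z').2 ⟨y', (hFstar x y' z').2 hy'⟩
      obtain ⟨w, hw, huniq⟩ := hUniqueStar x
      have : z' = z := (huniq z' hTsz').trans (huniq z hTs).symm
      exact this ▸ hTz'
  · -- Tbl ≡ Tbl* implies F → Q
    intro h x y z hFxyz
    have hT : Tbl x z := (hTbl x z).2 ⟨y, hFxyz⟩
    have hTs : Tblstar x z := (h x z).1 hT
    obtain ⟨y', hy'⟩ := (hTblstar x z).1 hTs
    exact ((hPQE x z).1 ⟨y', (hFstar x y' z).1 hy'⟩).1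
end

section
/- In the setting where F = G ∧ F', F* = G* ∧ F', Tbl = ∃Y.F, Tbl* = ∃Y.F*, Q is a PQE solution (∃Y.(G* ∧ F') ≡ Q ∧ ∃Y.F'), and for every input x there exists z with Tbl(x,z)=1: if (x,z) is an assignment with Tbl(x,z)=1 and Tbl*(x,z)=0, then F does not imply Q; concretely, taking y to be any witness with F(x,y,z)=1, the assignment (x,y,z) satisfies F and falsifies Q. -/
/-- The 'if' direction with an explicit counterexample: a point in `Tbl \ Tbl*` breaks `F ⇒ Q`. -/
theorem table_gap_breaks_property
    {σX σY σZ : Type}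
    (G F' Gstar : σX → σY → σZ → Prop)
    (Q : σX → σZ → Prop)
    (F : σX → σY → σZ → Prop)
    (hF : ∀ x y z, F x y z ↔ G x y z ∧ F' x y z)
    (Fstar : σX → σY → σZ → Prop)
    (hFstar : ∀ x y z, Fstar x y z ↔ Gstar x y z ∧ F' x y z)
    (Tbl Tblstar : σX → σZ → Prop)
    (hTbl : ∀ x z, Tbl x z ↔ ∃ y, F x y z)
    (hTblstar : ∀ x z, Tblstar x z ↔ ∃ y, Fstar x y z)
    (hPQE : ∀ x z, (∃ y, Gstar x y z ∧ F' x y z) ↔ (Q x z ∧ ∃ y, F' x y z))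
    (hTotal : ∀ x, ∃ z, Tbl x z)
    (x : σX) (z : σZ)
    (hIn : Tbl x z) (hOut : ¬ Tblstar x z) :
    (∀ y, F x y z → F x y z ∧ ¬ Q x z) ∧ ¬ (∀ x' y' z', F x' y' z' → Q x' z') := by
  have hnQ : ¬ Q x z := by
    intro hQ
    obtain ⟨y, hFy⟩ := (hTbl x z).mp hIn
    have hF' : F' x y z := ((hF x y z).mp hFy).2
    have := (hPQE x z).mpr ⟨hQ, y, hF'⟩
    exact hOut ((hTblstar x z).mpr (by obtain ⟨y', h1, h2⟩ := this; exact ⟨y', (hFstar x y' z).mpr ⟨h1, h2⟩⟩))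
  refine ⟨fun y hFy => ⟨hFy, hnQ⟩, fun h => ?_⟩
  obtain ⟨y, hFy⟩ := (hTbl x z).mp hIn
  exact hnQ (h x y z hFy)
end

section
/- Let N* be a circuit obtained from circuit N by a modification, with specifying formulas F(X,Y,Z) and F*(X,Y,Z) such that both ∃Y.F and ∃Y.F* are graphs of functions f, f* : assignments(X) → assignments(Z) (each input produces exactly one output). Let Q(X,Z) be a PQE solution: ∃Y.(G* ∧ F') ≡ Q ∧ ∃Y.F', where F = G ∧ F' and F* = G* ∧ F'. Then there exists an input x with f(x) ≠ f*(x) if and only if F does not imply Q. Consequently, an input x breaking Q (i.e., extracted from an assignment satisfying F ∧ ¬Q) makes N and N* produce different outputs. -/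
/-- Breaking `Q` corresponds exactly to distinguishing the two circuits' functions. -/
theorem fault_detection_iff_breaking_property
    {σX σY σZ : Type}
    (G F' Gstar : σX → σY → σZ → Prop)
    (Q : σX → σZ → Prop)
    (F : σX → σY → σZ → Prop)
    (hF : ∀ x y z, F x y z ↔ G x y z ∧ F' x y z)
    (Fstar : σX → σY → σZ → Prop)
    (hFstar : ∀ x y z, Fstar x y z ↔ Gstar x y z ∧ F' x y z)
    (f fstar : σX → σZ)
    (hGraph : ∀ x z, (∃ y, F x y z) ↔ z = f x)
    (hGraphStar : ∀ x z, (∃ y, Fstar x y z) ↔ z = fstar x)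
    (hPQE : ∀ x z, (∃ y, Gstar x y z ∧ F' x y z) ↔ (Q x z ∧ ∃ y, F' x y z)) :
    ((∃ x, f x ≠ fstar x) ↔ ¬ ∀ x y z, F x y z → Q x z) ∧
    (∀ x y z, F x y z → ¬ Q x z → f x ≠ fstar x) := by
  have key : ∀ x y z, F x y z → ¬ Q x z → f x ≠ fstar x := by
    intro x y z hFxyz hnQ heq
    have hz : z = f x := (hGraph x z).mp ⟨y, hFxyz⟩
    have hFs : ∃ y, Fstar x y z := (hGraphStar x z).mpr (by rw [hz, heq])
    obtain ⟨y', hy'⟩ := hFs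
    exact hnQ ((hPQE x z).mp ⟨y', (hFstar x y' z).mp hy'⟩).1
  refine ⟨⟨?_, ?_⟩, key⟩
  · rintro ⟨x, hx⟩ hall
    obtain ⟨y, hy⟩ := (hGraph x (f x)).mpr rfl
    have hQ : Q x (f x) := hall x y (f x) hy
    have hF' : F' x y (f x) := ((hF x y (f x)).mp hy).2
    obtain ⟨y', hy'⟩ := (hPQE x (f x)).mpr ⟨hQ, y, hF'⟩
    exact hx ((hGraphStar x (f x)).mp ⟨y', (hFstar x y' (f x)).mpr hy'⟩)
  · intro h
    by_contra hno
    push_neg at hno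
    exact h fun x y z hFxyz => by
      by_contra hnQ
      exact key x y z hFxyz hnQ (hno x)
end

section
/- Let F = G ∧ F' and F* = G* ∧ F' over variables X ∪ Y ∪ Z, and let Q(X,Z) be a PQE solution: ∃Y.(G* ∧ F') ≡ Q ∧ ∃Y.F'. If F implies F* (i.e., every assignment satisfying F satisfies G*), then F implies Q; equivalently, if Q is a false property of F (F does not imply Q), then F does not imply G*. -/
/-- If `F` implies `G*` then `F` implies `Q`; equivalently, a false property
requires `G*` not implied by `F`. -/
theorem false_property_requires_unimplied_modification
    {σX σY σZ : Type}
    (G F' Gstar : σX → σY → σZ → Prop)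
    (Q : σX → σZ → Prop)
    (F : σX → σY → σZ → Prop)
    (hF : ∀ x y z, F x y z ↔ G x y z ∧ F' x y z)
    (hPQE : ∀ x z, (∃ y, Gstar x y z ∧ F' x y z) ↔ (Q x z ∧ ∃ y, F' x y z)) :
    ((∀ x y z, F x y z → Gstar x y z) → ∀ x y z, F x y z → Q x z) ∧
    ((¬ ∀ x y z, F x y z → Q x z) → ¬ ∀ x y z, F x y z → Gstar x y z) := by
  have h1 : (∀ x y z, F x y z → Gstar x y z) → ∀ x y z, F x y z → Q x z := by
    intro h x y z hf
    have hf' := (hF x y z).mp hf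
    exact ((hPQE x z).mp ⟨y, h x y z hf, hf'.2⟩).1
  exact ⟨h1, fun hn h => hn (h1 h)⟩
end
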